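/- For all n ≥ 1 and every σ ∈ S_n: σ avoids both patterns 123 and 213 if and only if σ(i) + i ≤ n + 2 for every i ∈ {1, …, n}. Consequently, B_n(123,213) equals the Chan–Robbins–Yuen polytope CRY_n, the convex hull of those permutation matrices M_σ all of whose nonzero entries (i, σ(i)) satisfy σ(i) + i ≤ n + 2. -/

import Mathlib

/-- `σ` contains the pattern `π`. -/
def containsPattern {n k : ℕ} (σ : Equiv.Perm (Fin n)) (π : Equiv.Perm (Fin k)) : Prop :=
  ∃ f : Fin k → Fin n, StrictMono f ∧ ∀ a b : Fin k, σ (f a) < σ (f b) ↔ π a < π b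

/-- The pattern 123. -/
def p123 : Equiv.Perm (Fin 3) := 1
/-- The pattern 213. -/
def p213 : Equiv.Perm (Fin 3) := Equiv.swap 0 1

/-- The permutation matrix of `σ`, viewed as a vector in `ℝ^{n×n}`. -/
def permMatrix {n : ℕ} (σ : Equiv.Perm (Fin n)) : Fin n × Fin n → ℝ :=
  fun p => if σ p.1 = p.2 then 1 else 0

lemma avoid_iff_noTriple {n : ℕ} (σ : Equiv.Perm (Fin n)) :
    (¬ containsPattern σ p123 ∧ ¬ containsPattern σ p213) ↔
    ∀ a b c : Fin n, a < b → b < c → σ a < σ c → σ b < σ c → False := by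
  constructor
  · rintro ⟨h1, h2⟩ a b c hab hbc hac hbc'
    have hne : σ a ≠ σ b := fun h => absurd (σ.injective h) (ne_of_lt hab)
    rcases hne.lt_or_gt with h | h
    · apply h1
      refine ⟨![a, b, c], ?_, ?_⟩
      · intro x y hxy
        fin_cases x <;> fin_cases y <;>
          first
          | exact absurd hxy (by decide)
          | exact (by first | exact hab | exact hbc | exact hab.trans hbc)
      · intro x y
        fin_cases x <;> fin_cases y <;>
          first
          | exact iff_of_false (lt_irrefl _) (by decide)
          | exact iff_of_true (by first | exact h | exact hbc' | exact hac) (by decide)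
          | exact iff_of_false (lt_asymm (by first | exact h | exact hbc' | exact hac)) (by decide)
    · apply h2
      refine ⟨![a, b, c], ?_, ?_⟩
      · intro x y hxy
        fin_cases x <;> fin_cases y <;>
          first
          | exact absurd hxy (by decide)
          | exact (by first | exact hab | exact hbc | exact hab.trans hbc)
      · intro x y
        fin_cases x <;> fin_cases y <;>
          first
          | exact iff_of_false (lt_irrefl _) (by decide)
          | exact iff_of_true (by first | exact h | exact hbc' | exact hac) (by decide)
          | exact iff_of_false (lt_asymm (by first | exact h | exact hbc' | exact hac)) (by decide)
  · intro H
    constructor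
    · rintro ⟨f, hf, hc⟩
      exact H (f 0) (f 1) (f 2) (hf (by decide)) (hf (by decide))
        ((hc 0 2).mpr (by decide)) ((hc 1 2).mpr (by decide))
    · rintro ⟨f, hf, hc⟩
      exact H (f 0) (f 1) (f 2) (hf (by decide)) (hf (by decide))
        ((hc 0 2).mpr (by decide)) ((hc 1 2).mpr (by decide))

lemma bound_imp_noTriple {n : ℕ} (σ : Equiv.Perm (Fin n))
    (H : ∀ i : Fin n, (σ i : ℕ) + (i : ℕ) ≤ n)
    (a b c : Fin n) (hab : a < b) (hbc : b < c)
    (hac : σ a < σ c) (hbc' : σ b < σ c) : False := by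
  have hσc : 1 ≤ (σ c : ℕ) := by
    have := hac
    rw [Fin.lt_def] at this
    omega
  have hnpos : 0 < n := c.pos
  set m : Fin n := ⟨n - (σ c : ℕ), by omega⟩ with hm
  set S : Finset (Fin n) := (Finset.Ici (σ c)).map σ.symm.toEmbedding with hS
  have hmemS : ∀ j : Fin n, j ∈ S ↔ σ c ≤ σ j := by
    intro j
    rw [hS, Finset.mem_map_equiv]
    simp [Finset.mem_Ici]
  have hScard : S.card = n - (σ c : ℕ) := by
    rw [hS, Finset.card_map, Fin.card_Ici]
  have hSle : ∀ j ∈ S, (j : ℕ) ≤ n - (σ c : ℕ) := by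
    intro j hj
    have h1 := (hmemS j).mp hj
    have h2 := H j
    rw [Fin.le_def] at h1
    omega
  have hcm : (c : ℕ) ≤ n - (σ c : ℕ) := by
    have := H c; omega
  have haS : a ∉ S := by
    intro h
    have := (hmemS a).mp h
    exact absurd hac (not_lt.mpr this)
  have hbS : b ∉ S := by
    intro h
    have := (hmemS b).mp h
    exact absurd hbc' (not_lt.mpr this)
  have hsub : insert a (insert b S) ⊆ Finset.Iic m := by
    intro j hj
    rw [Finset.mem_Iic, Fin.le_def]
    simp only [Finset.mem_insert] at hj
    have hab' := Fin.lt_def.mp hab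
    have hbc'' := Fin.lt_def.mp hbc
    rcases hj with rfl | rfl | hj
    · show (j : ℕ) ≤ n - (σ c : ℕ); omega
    · show (j : ℕ) ≤ n - (σ c : ℕ); omega
    · exact hSle j hj
  have hcard := Finset.card_le_card hsub
  rw [Finset.card_insert_of_notMem, Finset.card_insert_of_notMem hbS,
    Fin.card_Iic, hScard] at hcard
  · simp only [hm] at hcard; omega
  · simp only [Finset.mem_insert]
    push_neg
    exact ⟨ne_of_lt hab, haS⟩

lemma noTriple_imp_bound {n : ℕ} (σ : Equiv.Perm (Fin n))
    (H : ∀ a b c : Fin n, a < b → b < c → σ a < σ c → σ b < σ c → False)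
    (i : Fin n) : (σ i : ℕ) + (i : ℕ) ≤ n := by
  by_contra hcon
  push_neg at hcon
  set W : Finset (Fin n) := (Finset.Iio i).filter (fun j => σ j < σ i) with hW
  set V : Finset (Fin n) := (Finset.Iio i).filter (fun j => ¬ σ j < σ i) with hV
  have hVW : W.card + V.card = (Finset.Iio i).card :=
    Finset.card_filter_add_card_filter_not _
  have hVcard : V.card ≤ n - 1 - (σ i : ℕ) := by
    rw [← Fin.card_Ioi (σ i)]
    apply Finset.card_le_card_of_injOn σ
    · intro j hj
      simp only [hV, Finset.mem_coe, Finset.mem_filter, Finset.mem_Iio] at hj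
      rw [Finset.mem_coe, Finset.mem_Ioi]
      rcases hj with ⟨hji, hσ⟩
      rcases lt_or_eq_of_le (not_lt.mp hσ) with h | h
      · exact h
      · exact absurd (σ.injective h).symm (ne_of_lt hji)
    · exact fun x _ y _ h => σ.injective h
  have hIio : (Finset.Iio i).card = (i : ℕ) := Fin.card_Iio i
  have h2 : 2 ≤ W.card := by omega
  obtain ⟨x, hx, y, hy, hxy⟩ := Finset.one_lt_card.mp (by omega : 1 < W.card)
  rw [hW, Finset.mem_filter, Finset.mem_Iio] at hx hy
  rcases hxy.lt_or_gt with h | h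
  · exact H x y i h hy.1 hx.2 hy.2
  · exact H y x i h hx.1 hy.2 hx.2

lemma key_iff {n : ℕ} (σ : Equiv.Perm (Fin n)) :
    (¬ containsPattern σ p123 ∧ ¬ containsPattern σ p213) ↔
      ∀ i : Fin n, ((σ i : ℕ) + 1) + ((i : ℕ) + 1) ≤ n + 2 := by
  rw [avoid_iff_noTriple]
  constructor
  · intro H i
    have := noTriple_imp_bound σ H i
    omega
  · intro H a b c hab hbc h1 h2
    exact bound_imp_noTriple σ (fun i => by have := H i; omega) a b c hab hbc h1 h2

theorem stmt12 (n : ℕ) (hn : 1 ≤ n) :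
    (∀ σ : Equiv.Perm (Fin n),
      (¬ containsPattern σ p123 ∧ ¬ containsPattern σ p213) ↔
        ∀ i : Fin n, ((σ i : ℕ) + 1) + ((i : ℕ) + 1) ≤ n + 2) ∧
    convexHull ℝ (permMatrix ''
        {σ : Equiv.Perm (Fin n) | ¬ containsPattern σ p123 ∧ ¬ containsPattern σ p213}) =
      convexHull ℝ (permMatrix ''
        {σ : Equiv.Perm (Fin n) |
          ∀ i : Fin n, ((σ i : ℕ) + 1) + ((i : ℕ) + 1) ≤ n + 2}) := by
  refine ⟨fun σ => key_iff σ, ?_⟩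
  have hset : {σ : Equiv.Perm (Fin n) | ¬ containsPattern σ p123 ∧ ¬ containsPattern σ p213} =
      {σ : Equiv.Perm (Fin n) | ∀ i : Fin n, ((σ i : ℕ) + 1) + ((i : ℕ) + 1) ≤ n + 2} :=
    Set.ext fun σ => key_iff σ
  rw [hset]
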